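/- arXiv:2505.20950 — 2 statements merged into one kernel-verified Lean document; each statement's English description precedes it below -/
import Mathlib

section
/- (Inverse formula) If the kernel family {γ_ω}_{ω∈Ω} over a measure space (Ω,μ) satisfies the Calderón condition ∫_Ω |γ_ω(r)|² dμ(ω) = 1 for all r ∈ {1,…,k}, then for all f ∈ L²(G) and all x ∈ G: f(x) = (1/|G|) Σ_{h∈G} ∫_Ω W_γ f(ω,h) ψ_{γ_ω}†(h⁻¹x) dμ(ω), where W_γ f(ω,h) = (f ∗ ψ_{γ_ω})(h) and ψ†(y) = conj(ψ(y⁻¹)). -/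
open scoped BigOperators
open MeasureTheory

noncomputable def conv {G : Type*} [Group G] [Fintype G] (f g : G → ℂ) : G → ℂ :=
  fun x => (Fintype.card G : ℂ)⁻¹ * ∑ y, f y * g (y⁻¹ * x)

noncomputable def nsq {G : Type*} [Fintype G] (f : G → ℂ) : ℝ :=
  (Fintype.card G : ℝ)⁻¹ * ∑ x, Complex.normSq (f x)

noncomputable def ip {G : Type*} [Fintype G] (f g : G → ℂ) : ℂ :=
  (Fintype.card G : ℂ)⁻¹ * ∑ x, f x * (starRingEnd ℂ) (g x)

noncomputable def gwavelet {G : Type*} [Group G] {k : ℕ} (d : Fin k → ℕ)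
    (π : (r : Fin k) → G →* Matrix (Fin (d r)) (Fin (d r)) ℂ)
    (γ : Fin k → ℂ) : G → ℂ :=
  fun x => ∑ r, (d r : ℂ) * γ r * Matrix.trace (π r x)

noncomputable def Upath {G : Type*} [Group G] [Fintype G] {J : ℕ}
    (ψ : Fin J → G → ℂ) : List (Fin J) → (G → ℂ) → G → ℂ
  | [], f => f
  | j :: p, f => Upath ψ p fun x => ((‖conv (ψ j) f x‖ : ℝ) : ℂ)

noncomputable def Sop {G : Type*} [Group G] [Fintype G] {k J : ℕ} (d : Fin k → ℕ)
    (π : (r : Fin k) → G →* Matrix (Fin (d r)) (Fin (d r)) ℂ)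
    (γ : Fin (J + 1) → Fin k → ℂ) (p : List (Fin J)) (f : G → ℂ) : G → ℂ :=
  conv (gwavelet d π (γ 0)) (Upath (fun j => gwavelet d π (γ j.succ)) p f)

section Aux
variable {G : Type*} [Group G] [Fintype G]

lemma conv_sum {k : ℕ} (f : G → ℂ) (g : Fin k → ℂ) (F : Fin k → G → ℂ) (h : G) :
    conv f (fun z => ∑ r, g r * F r z) h = ∑ r, g r * conv f (F r) h := by
  simp only [conv, Finset.mul_sum]
  rw [Finset.sum_comm]
  refine Finset.sum_congr rfl fun r _ => ?_
  exact Finset.sum_congr rfl fun y _ => by ring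

lemma conv_const_mul (f g : G → ℂ) (a : ℂ) (x : G) :
    conv f (fun z => a * g z) x = a * conv f g x := by
  simp only [conv, Finset.mul_sum]
  exact Finset.sum_congr rfl fun y _ => by ring

lemma conv_assoc (f g h : G → ℂ) (x : G) :
    conv (conv f g) h x = conv f (conv g h) x := by
  simp only [conv, Finset.sum_mul, Finset.mul_sum, ← mul_assoc]
  rw [Finset.sum_comm]
  refine Finset.sum_congr rfl fun y _ => ?_
  refine Fintype.sum_equiv (Equiv.mulLeft y⁻¹) _ _ fun u => ?_
  simp only [Equiv.coe_mulLeft, mul_inv_rev, mul_assoc, inv_mul_cancel_left]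
  ring

end Aux

section Rep
set_option linter.unusedSectionVars false
variable {G : Type*} [Group G] [Fintype G] {k : ℕ} {d : Fin k → ℕ}
  {π : (r : Fin k) → G →* Matrix (Fin (d r)) (Fin (d r)) ℂ}

lemma pi_inv (hunit : ∀ r x, π r x ∈ Matrix.unitaryGroup (Fin (d r)) ℂ) (r : Fin k) (x : G) :
    π r x⁻¹ = star (π r x) := by
  have h2 : π r x * star (π r x) = 1 := (hunit r x).2
  calc π r x⁻¹ = π r x⁻¹ * (π r x * star (π r x)) := by rw [h2, mul_one]
    _ = (π r x⁻¹ * π r x) * star (π r x) := by rw [mul_assoc]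
    _ = star (π r x) := by rw [← map_mul, inv_mul_cancel, map_one, one_mul]

lemma conj_trace (hunit : ∀ r x, π r x ∈ Matrix.unitaryGroup (Fin (d r)) ℂ) (r : Fin k) (x : G) :
    (starRingEnd ℂ) (π r x).trace = (π r x⁻¹).trace := by
  rw [pi_inv hunit, Matrix.star_eq_conjTranspose, Matrix.trace_conjTranspose]
  rfl

lemma intertwine (r s : Fin k) (A : Matrix (Fin (d r)) (Fin (d s)) ℂ) (g : G) :
    π r g * (∑ y : G, π r y * A * π s y⁻¹) = (∑ y : G, π r y * A * π s y⁻¹) * π s g := by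
  rw [Matrix.mul_sum, Matrix.sum_mul]
  refine Fintype.sum_equiv (Equiv.mulLeft g) _ _ fun y => ?_
  show (π r) g * ((π r) y * A * (π s) y⁻¹) = (π r) (g * y) * A * (π s) ((g * y)⁻¹) * (π s) g
  rw [map_mul, mul_inv_rev, map_mul]
  simp only [Matrix.mul_assoc]
  rw [← map_mul, inv_mul_cancel, map_one, mul_one]

lemma trace_conj_term (r : Fin k) (A : Matrix (Fin (d r)) (Fin (d r)) ℂ) (y : G) :
    (π r y * A * π r y⁻¹).trace = A.trace := by
  rw [Matrix.trace_mul_comm, ← mul_assoc, ← map_mul, inv_mul_cancel, map_one, one_mul]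

lemma schur_same (hdpos : ∀ r, 0 < d r)
    (hirr : ∀ (r : Fin k) (M : Matrix (Fin (d r)) (Fin (d r)) ℂ),
      (∀ x, M * π r x = π r x * M) → ∃ c : ℂ, M = c • (1 : Matrix (Fin (d r)) (Fin (d r)) ℂ))
    (r : Fin k) (A : Matrix (Fin (d r)) (Fin (d r)) ℂ) :
    ∑ y : G, π r y * A * π r y⁻¹
      = (((Fintype.card G : ℂ) * A.trace) / (d r : ℂ)) • 1 := by
  obtain ⟨c, hc⟩ := hirr r (∑ y : G, π r y * A * π r y⁻¹) (fun g => (intertwine r r A g).symm)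
  have ht : (∑ y : G, π r y * A * π r y⁻¹).trace = (Fintype.card G : ℂ) * A.trace := by
    rw [Matrix.trace_sum]
    simp [trace_conj_term, Finset.sum_const, nsmul_eq_mul]
  rw [hc] at ht ⊢
  rw [Matrix.trace_smul, Matrix.trace_one, smul_eq_mul, Fintype.card_fin] at ht
  have hd : (d r : ℂ) ≠ 0 := Nat.cast_ne_zero.mpr (hdpos r).ne'
  congr 1
  rw [eq_div_iff hd]
  exact ht

lemma schur_ne (hneq : ∀ (r s : Fin k), r ≠ s → ∀ T : Matrix (Fin (d r)) (Fin (d s)) ℂ,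
      (∀ x, π r x * T = T * π s x) → T = 0)
    {r s : Fin k} (hrs : r ≠ s) (A : Matrix (Fin (d r)) (Fin (d s)) ℂ) :
    ∑ y : G, π r y * A * π s y⁻¹ = 0 :=
  hneq r s hrs _ (fun g => intertwine r s A g)

end Rep

section Rep2
set_option linter.unusedSectionVars false
variable {G : Type*} [Group G] [Fintype G] {k : ℕ} {d : Fin k → ℕ}
  {π : (r : Fin k) → G →* Matrix (Fin (d r)) (Fin (d r)) ℂ}

lemma schur_entry_same (hdpos : ∀ r, 0 < d r)
    (hirr : ∀ (r : Fin k) (M : Matrix (Fin (d r)) (Fin (d r)) ℂ),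
      (∀ x, M * π r x = π r x * M) → ∃ c : ℂ, M = c • (1 : Matrix (Fin (d r)) (Fin (d r)) ℂ))
    (r : Fin k) (a c e b : Fin (d r)) :
    ∑ y : G, (π r y) a c * (π r y⁻¹) e b
      = if c = e ∧ a = b then (Fintype.card G : ℂ) / (d r : ℂ) else 0 := by
  have h := schur_same (π := π) hdpos hirr r (Matrix.single c e 1)
  have h2 := Matrix.ext_iff.mpr h a b
  rw [Matrix.sum_apply] at h2
  simp only [Matrix.mul_apply, Matrix.single, Matrix.of_apply, ite_and, mul_ite, mul_one,
    mul_zero, ite_mul, zero_mul, Finset.sum_ite_eq, Finset.sum_ite_eq', Finset.mem_univ, if_true,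
    Matrix.smul_apply, Matrix.one_apply, Matrix.trace, Matrix.diag, smul_eq_mul] at h2
  rw [h2]
  rcases eq_or_ne c e with rfl | hce
  · rcases eq_or_ne a b with rfl | hab
    · simp
    · simp [hab]
  · have : e ≠ c := Ne.symm hce
    simp [hce, this, zero_div]

end Rep2

section Rep3
set_option linter.unusedSectionVars false
variable {G : Type*} [Group G] [Fintype G] {k : ℕ} {d : Fin k → ℕ}
  {π : (r : Fin k) → G →* Matrix (Fin (d r)) (Fin (d r)) ℂ}

lemma schur_entry_ne (hneq : ∀ (r s : Fin k), r ≠ s → ∀ T : Matrix (Fin (d r)) (Fin (d s)) ℂ,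
      (∀ x, π r x * T = T * π s x) → T = 0)
    {r s : Fin k} (hrs : r ≠ s) (a : Fin (d r)) (c : Fin (d r)) (e b : Fin (d s)) :
    ∑ y : G, (π r y) a c * (π s y⁻¹) e b = 0 := by
  have h := schur_ne (π := π) hneq hrs (Matrix.single c e 1)
  have h2 := Matrix.ext_iff.mpr h a b
  rw [Matrix.sum_apply] at h2
  simp only [Matrix.mul_apply, Matrix.single, Matrix.of_apply, ite_and, mul_ite, mul_one,
    mul_zero, ite_mul, zero_mul, Finset.sum_ite_eq, Finset.sum_ite_eq', Finset.mem_univ, if_true,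
    Matrix.zero_apply] at h2
  exact h2

lemma char_sum_expand (r s : Fin k) (x : G) :
    ∑ y : G, (π r y).trace * (π s (y⁻¹ * x)).trace
      = ∑ a : Fin (d r), ∑ e : Fin (d s), ∑ m : Fin (d s),
          (∑ y : G, (π r y) a a * (π s y⁻¹) e m) * (π s x) m e := by
  have key : ∀ y : G, (π r y).trace * (π s (y⁻¹ * x)).trace
      = ∑ a : Fin (d r), ∑ e : Fin (d s), ∑ m : Fin (d s),
          ((π r y) a a * (π s y⁻¹) e m) * (π s x) m e := by
    intro y
    rw [map_mul]
    simp only [Matrix.trace, Matrix.diag, Matrix.mul_apply, Finset.sum_mul, Finset.mul_sum]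
    refine ((Finset.sum_congr rfl fun e _ => Finset.sum_comm).trans ?_)
    rw [Finset.sum_comm]
    refine Finset.sum_congr rfl fun a _ => ?_
    refine Finset.sum_congr rfl fun e _ => ?_
    exact Finset.sum_congr rfl fun m _ => by ring
  calc ∑ y : G, (π r y).trace * (π s (y⁻¹ * x)).trace
      = ∑ y : G, ∑ a : Fin (d r), ∑ e : Fin (d s), ∑ m : Fin (d s),
          ((π r y) a a * (π s y⁻¹) e m) * (π s x) m e := by simp only [key]
    _ = ∑ a : Fin (d r), ∑ y : G, ∑ e : Fin (d s), ∑ m : Fin (d s),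
          ((π r y) a a * (π s y⁻¹) e m) * (π s x) m e := Finset.sum_comm
    _ = ∑ a : Fin (d r), ∑ e : Fin (d s), ∑ y : G, ∑ m : Fin (d s),
          ((π r y) a a * (π s y⁻¹) e m) * (π s x) m e :=
        Finset.sum_congr rfl fun a _ => Finset.sum_comm
    _ = ∑ a : Fin (d r), ∑ e : Fin (d s), ∑ m : Fin (d s), ∑ y : G,
          ((π r y) a a * (π s y⁻¹) e m) * (π s x) m e :=
        Finset.sum_congr rfl fun a _ => Finset.sum_congr rfl fun e _ => Finset.sum_comm
    _ = _ := by simp only [Finset.sum_mul]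

lemma conv_char (hdpos : ∀ r, 0 < d r)
    (hirr : ∀ (r : Fin k) (M : Matrix (Fin (d r)) (Fin (d r)) ℂ),
      (∀ x, M * π r x = π r x * M) → ∃ c : ℂ, M = c • (1 : Matrix (Fin (d r)) (Fin (d r)) ℂ))
    (hneq : ∀ (r s : Fin k), r ≠ s → ∀ T : Matrix (Fin (d r)) (Fin (d s)) ℂ,
      (∀ x, π r x * T = T * π s x) → T = 0)
    (r s : Fin k) (x : G) :
    conv (fun z => (π r z).trace) (fun z => (π s z).trace) x
      = if r = s then (d r : ℂ)⁻¹ * (π r x).trace else 0 := by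
  have hG : (Fintype.card G : ℂ) ≠ 0 := Nat.cast_ne_zero.mpr Fintype.card_ne_zero
  rcases eq_or_ne r s with rfl | hrs
  · rw [if_pos rfl]
    show (Fintype.card G : ℂ)⁻¹ * ∑ y : G, (π r y).trace * (π r (y⁻¹ * x)).trace = _
    rw [char_sum_expand]
    simp only [schur_entry_same (π := π) hdpos hirr r]
    have step : ∀ a : Fin (d r),
        (∑ e : Fin (d r), ∑ m : Fin (d r),
          (if a = e ∧ a = m then (Fintype.card G : ℂ) / (d r : ℂ) else 0) * (π r x) m e)
        = (Fintype.card G : ℂ) / (d r : ℂ) * (π r x) a a := by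
      intro a
      rw [Finset.sum_comm]
      simp [ite_and, ite_mul, zero_mul, Finset.sum_ite_eq]
    have hsum : (∑ a : Fin (d r), ∑ e : Fin (d r), ∑ m : Fin (d r),
          (if a = e ∧ a = m then (Fintype.card G : ℂ) / (d r : ℂ) else 0) * (π r x) m e)
        = ∑ a : Fin (d r), (Fintype.card G : ℂ) / (d r : ℂ) * (π r x) a a :=
      Finset.sum_congr rfl fun a _ => step a
    rw [hsum, ← Finset.mul_sum]
    have htr : ∑ a : Fin (d r), (π r x) a a = (π r x).trace := rfl
    rw [htr]
    have hd : (d r : ℂ) ≠ 0 := Nat.cast_ne_zero.mpr (hdpos r).ne'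
    field_simp
  · rw [if_neg hrs]
    show (Fintype.card G : ℂ)⁻¹ * ∑ y : G, (π r y).trace * (π s (y⁻¹ * x)).trace = 0
    rw [char_sum_expand]
    simp only [schur_entry_ne (π := π) hneq hrs, zero_mul, Finset.sum_const_zero, mul_zero]

end Rep3

section Rep4
set_option linter.unusedSectionVars false
variable {G : Type*} [Group G] [Fintype G] {k : ℕ} {d : Fin k → ℕ}
  {π : (r : Fin k) → G →* Matrix (Fin (d r)) (Fin (d r)) ℂ}

lemma char_one (r : Fin k) : (π r (1 : G)).trace = (d r : ℂ) := by
  rw [map_one, Matrix.trace_one, Fintype.card_fin]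

lemma char_orth (hdpos : ∀ r, 0 < d r)
    (hunit : ∀ r x, π r x ∈ Matrix.unitaryGroup (Fin (d r)) ℂ)
    (hirr : ∀ (r : Fin k) (M : Matrix (Fin (d r)) (Fin (d r)) ℂ),
      (∀ x, M * π r x = π r x * M) → ∃ c : ℂ, M = c • (1 : Matrix (Fin (d r)) (Fin (d r)) ℂ))
    (hneq : ∀ (r s : Fin k), r ≠ s → ∀ T : Matrix (Fin (d r)) (Fin (d s)) ℂ,
      (∀ x, π r x * T = T * π s x) → T = 0)
    (r s : Fin k) :
    ∑ y : G, (π r y).trace * (starRingEnd ℂ) ((π s y).trace)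
      = if r = s then (Fintype.card G : ℂ) else 0 := by
  have hG : (Fintype.card G : ℂ) ≠ 0 := Nat.cast_ne_zero.mpr Fintype.card_ne_zero
  have h := conv_char (π := π) hdpos hirr hneq r s 1
  simp only [conv, mul_one] at h
  have h2 : ∑ y : G, (π r y).trace * (π s y⁻¹).trace
      = (Fintype.card G : ℂ) * (if r = s then (d r : ℂ)⁻¹ * (π r (1:G)).trace else 0) := by
    rw [← h, ← mul_assoc, mul_inv_cancel₀ hG, one_mul]
  calc ∑ y : G, (π r y).trace * (starRingEnd ℂ) ((π s y).trace)
      = ∑ y : G, (π r y).trace * (π s y⁻¹).trace :=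
        Finset.sum_congr rfl fun y _ => by rw [conj_trace hunit]
    _ = (Fintype.card G : ℂ) * (if r = s then (d r : ℂ)⁻¹ * (π r (1:G)).trace else 0) := h2
    _ = if r = s then (Fintype.card G : ℂ) else 0 := by
        rcases eq_or_ne r s with rfl | hrs
        · have hd : (d r : ℂ) ≠ 0 := Nat.cast_ne_zero.mpr (hdpos r).ne'
          simp [char_one (π := π), hd]
        · simp [hrs]
end Rep4

section Rep5
set_option linter.unusedSectionVars false
set_option maxHeartbeats 1000000
variable {G : Type*} [Group G] [Fintype G] {k : ℕ} {d : Fin k → ℕ}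
  {π : (r : Fin k) → G →* Matrix (Fin (d r)) (Fin (d r)) ℂ}

lemma char_class_const (r : Fin k) {a b : G} (hab : ConjClasses.mk a = ConjClasses.mk b) :
    (π r a).trace = (π r b).trace := by
  obtain ⟨g, hg⟩ := isConj_iff.mp (ConjClasses.mk_eq_mk_iff_isConj.mp hab)
  rw [← hg, map_mul, map_mul, Matrix.trace_mul_comm, ← Matrix.mul_assoc, ← map_mul,
    inv_mul_cancel, map_one, Matrix.one_mul]

open scoped Classical in
lemma completeness (hdpos : ∀ r, 0 < d r)
    (hunit : ∀ r x, π r x ∈ Matrix.unitaryGroup (Fin (d r)) ℂ)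
    (hirr : ∀ (r : Fin k) (M : Matrix (Fin (d r)) (Fin (d r)) ℂ),
      (∀ x, M * π r x = π r x * M) → ∃ c : ℂ, M = c • (1 : Matrix (Fin (d r)) (Fin (d r)) ℂ))
    (hneq : ∀ (r s : Fin k), r ≠ s → ∀ T : Matrix (Fin (d r)) (Fin (d s)) ℂ,
      (∀ x, π r x * T = T * π s x) → T = 0)
    (hcard : Nat.card (ConjClasses G) = k) (x : G) :
    ∑ r : Fin k, (d r : ℂ) * (π r x).trace
      = if x = 1 then (Fintype.card G : ℂ) else 0 := by
  classical
  have hGpos : 0 < Fintype.card G := Fintype.card_pos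
  have hG : (Fintype.card G : ℂ) ≠ 0 := Nat.cast_ne_zero.mpr hGpos.ne'
  haveI : Fintype (ConjClasses G) := Fintype.ofSurjective ConjClasses.mk ConjClasses.mk_surjective
  have hk : Fintype.card (ConjClasses G) = k := by rw [← Nat.card_eq_fintype_card, hcard]
  let e : ConjClasses G ≃ Fin k := Fintype.equivFinOfCardEq hk
  have hrep : ∀ c : ConjClasses G, ConjClasses.mk (ConjClasses.exists_rep c).choose = c :=
    fun c => (ConjClasses.exists_rep c).choose_spec
  set rep : ConjClasses G → G := fun c => (ConjClasses.exists_rep c).choose with hrepdef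
  -- fiber sizes
  set n : ConjClasses G → ℕ :=
    fun c => (Finset.univ.filter fun y : G => ConjClasses.mk y = c).card with hn
  have hn_pos : ∀ c, 0 < n c := fun c =>
    Finset.card_pos.mpr ⟨rep c, by simp only [Finset.mem_filter, Finset.mem_univ, true_and]; exact hrep c⟩
  have hfib : ∀ F : ConjClasses G → ℂ,
      ∑ y : G, F (ConjClasses.mk y) = ∑ c : ConjClasses G, (n c : ℂ) * F c := by
    intro F
    rw [← Finset.sum_fiberwise' Finset.univ ConjClasses.mk F]
    refine Finset.sum_congr rfl fun c _ => ?_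
    rw [Finset.sum_const, nsmul_eq_mul]
  -- sqrt weights
  set q : ConjClasses G → ℝ := fun c => Real.sqrt ((n c : ℝ) / (Fintype.card G : ℝ)) with hq
  have hq_pos : ∀ c, 0 < q c := fun c =>
    Real.sqrt_pos.mpr (div_pos (by exact_mod_cast hn_pos c) (by exact_mod_cast hGpos))
  have hq_sq : ∀ c, (q c : ℂ) * (q c : ℂ) = ((n c : ℂ) / (Fintype.card G : ℂ)) := by
    intro c
    rw [← Complex.ofReal_mul, Real.mul_self_sqrt (by positivity)]
    push_cast
    ring
  -- the weighted character table
  set U : Matrix (Fin k) (Fin k) ℂ :=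
    Matrix.of (fun r c => (π r (rep (e.symm c))).trace * (q (e.symm c) : ℂ)) with hU
  have hrow : U * U.conjTranspose = 1 := by
    ext r s
    rw [Matrix.mul_apply, Matrix.one_apply]
    simp only [hU, Matrix.conjTranspose_apply, Matrix.of_apply, Complex.star_def, map_mul,
      Complex.conj_ofReal]
    have step1 : ∀ c : Fin k,
        (π r (rep (e.symm c))).trace * (q (e.symm c) : ℂ) *
          ((starRingEnd ℂ) ((π s (rep (e.symm c))).trace) * (q (e.symm c) : ℂ))
        = (n (e.symm c) : ℂ) / (Fintype.card G : ℂ) *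
            ((π r (rep (e.symm c))).trace * (starRingEnd ℂ) ((π s (rep (e.symm c))).trace)) := by
      intro c
      rw [show ∀ A B C : ℂ, A * C * (B * C) = C * C * (A * B) from fun A B C => by ring,
        hq_sq]
    rw [Finset.sum_congr rfl fun c _ => step1 c]
    rw [Equiv.sum_comp e.symm (fun c => (n c : ℂ) / (Fintype.card G : ℂ) *
          ((π r (rep c)).trace * (starRingEnd ℂ) ((π s (rep c)).trace)))]
    have step2 : ∑ c : ConjClasses G, (n c : ℂ) / (Fintype.card G : ℂ) *
          ((π r (rep c)).trace * (starRingEnd ℂ) ((π s (rep c)).trace))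
        = (Fintype.card G : ℂ)⁻¹ * ∑ y : G, (π r y).trace * (starRingEnd ℂ) ((π s y).trace) := by
      have hFy : ∀ y : G, (π r y).trace * (starRingEnd ℂ) ((π s y).trace)
          = (π r (rep (ConjClasses.mk y))).trace *
              (starRingEnd ℂ) ((π s (rep (ConjClasses.mk y))).trace) := by
        intro y
        rw [char_class_const r (hrep (ConjClasses.mk y)).symm,
          char_class_const s (hrep (ConjClasses.mk y)).symm]
      rw [Finset.sum_congr rfl fun y _ => hFy y,
        hfib fun c => (π r (rep c)).trace * (starRingEnd ℂ) ((π s (rep c)).trace),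
        Finset.mul_sum]
      exact Finset.sum_congr rfl fun c _ => by ring
    rw [step2, char_orth (π := π) hdpos hunit hirr hneq r s]
    rcases eq_or_ne r s with rfl | hrs
    · simp [hG]
    · simp [hrs]
  have hcol : U.conjTranspose * U = 1 := mul_eq_one_comm.mp hrow
  -- now evaluate the (class of 1, class of x) entry
  have hone : ∀ y : G, ConjClasses.mk y = ConjClasses.mk (1 : G) ↔ y = 1 := by
    intro y
    rw [ConjClasses.mk_eq_mk_iff_isConj, isConj_one_left]
  have hrep1 : rep (ConjClasses.mk (1 : G)) = 1 := (hone _).mp (hrep _)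
  have hn1 : n (ConjClasses.mk (1 : G)) = 1 := by
    have hset : (Finset.univ.filter fun y : G => ConjClasses.mk y = ConjClasses.mk (1:G))
        = {1} := by ext y; simp [hone y]
    simp only [hn, hset, Finset.card_singleton]
  have hentry := Matrix.ext_iff.mpr hcol (e (ConjClasses.mk (1 : G))) (e (ConjClasses.mk x))
  rw [Matrix.mul_apply, Matrix.one_apply] at hentry
  simp only [hU, Matrix.conjTranspose_apply, Matrix.of_apply, Equiv.symm_apply_apply, map_mul,
    Complex.conj_ofReal, hrep1, char_one (π := π), EmbeddingLike.apply_eq_iff_eq] at hentry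
  have hstep : ∀ r : Fin k,
      star ((d r : ℂ) * (q (ConjClasses.mk (1:G)) : ℂ)) *
        ((π r (rep (ConjClasses.mk x))).trace * (q (ConjClasses.mk x) : ℂ))
      = ((q (ConjClasses.mk (1:G)) : ℂ) * (q (ConjClasses.mk x) : ℂ)) *
          ((d r : ℂ) * (π r x).trace) := by
    intro r
    rw [char_class_const r (hrep (ConjClasses.mk x))]
    rw [Complex.star_def, map_mul, Complex.conj_ofReal, map_natCast]
    ring
  rw [Finset.sum_congr rfl fun r _ => hstep r, ← Finset.mul_sum] at hentry
  by_cases hx : x = 1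
  · subst hx
    rw [if_pos rfl] at hentry
    rw [if_pos rfl]
    have hqq : ((q (ConjClasses.mk (1:G)) : ℂ) * (q (ConjClasses.mk (1:G)) : ℂ))
        = 1 / (Fintype.card G : ℂ) := by
      rw [hq_sq, hn1]; norm_num
    rw [hqq] at hentry
    field_simp at hentry
    simpa [char_one (π := π)] using hentry
  · rw [if_neg hx]
    have hne : ConjClasses.mk (1:G) ≠ ConjClasses.mk x := fun h => hx ((hone x).mp h.symm)
    rw [if_neg hne] at hentry
    have hq1 : ((q (ConjClasses.mk (1:G)) : ℝ) : ℂ) ≠ 0 := by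
      exact_mod_cast (hq_pos (ConjClasses.mk (1:G))).ne'
    have hqx : ((q (ConjClasses.mk x) : ℝ) : ℂ) ≠ 0 := by
      exact_mod_cast (hq_pos (ConjClasses.mk x)).ne'
    rcases mul_eq_zero.mp hentry with h | h
    · exact absurd h (mul_ne_zero hq1 hqx)
    · exact h
end Rep5

set_option maxHeartbeats 1000000 in
theorem stmt5 {G : Type*} [Group G] [Fintype G]
    {k : ℕ} (d : Fin k → ℕ) (hdpos : ∀ r, 0 < d r)
    (π : (r : Fin k) → G →* Matrix (Fin (d r)) (Fin (d r)) ℂ)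
    (hunit : ∀ r x, π r x ∈ Matrix.unitaryGroup (Fin (d r)) ℂ)
    (hirr : ∀ (r : Fin k) (M : Matrix (Fin (d r)) (Fin (d r)) ℂ),
      (∀ x, M * π r x = π r x * M) → ∃ c : ℂ, M = c • (1 : Matrix (Fin (d r)) (Fin (d r)) ℂ))
    (hneq : ∀ (r s : Fin k), r ≠ s → ∀ T : Matrix (Fin (d r)) (Fin (d s)) ℂ,
      (∀ x, π r x * T = T * π s x) → T = 0)
    (hcard : Nat.card (ConjClasses G) = k)
    {Ω : Type*} [MeasurableSpace Ω] (μ : Measure Ω)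
    (γ : Ω → Fin k → ℂ)
    (hint : ∀ r s : Fin k, Integrable (fun ω => γ ω r * (starRingEnd ℂ) (γ ω s)) μ)
    (hCalderon : ∀ r : Fin k, ∫ ω, Complex.normSq (γ ω r) ∂μ = 1)
    (f : G → ℂ) (x : G) :
    f x = (Fintype.card G : ℂ)⁻¹ * ∑ h : G,
      ∫ ω, conv f (gwavelet d π (γ ω)) h *
        (starRingEnd ℂ) (gwavelet d π (γ ω) ((h⁻¹ * x)⁻¹)) ∂μ := by
  classical
  have hG : (Fintype.card G : ℂ) ≠ 0 := Nat.cast_ne_zero.mpr Fintype.card_ne_zero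
  set I : Fin k → Fin k → ℂ := fun r s => ∫ ω, γ ω r * (starRingEnd ℂ) (γ ω s) ∂μ with hI
  set A : Fin k → G → ℂ := fun r h => (d r : ℂ) * conv f (fun z => (π r z).trace) h with hA
  set B : Fin k → G → ℂ := fun s h => (d s : ℂ) * (π s (h⁻¹ * x)).trace with hB
  have hexp : ∀ (ω : Ω) (h : G),
      conv f (gwavelet d π (γ ω)) h * (starRingEnd ℂ) (gwavelet d π (γ ω) ((h⁻¹ * x)⁻¹))
      = ∑ r, ∑ s, (A r h * B s h) * (γ ω r * (starRingEnd ℂ) (γ ω s)) := by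
    intro ω h
    have e1 : conv f (gwavelet d π (γ ω)) h = ∑ r, γ ω r * A r h := by
      have hgw : gwavelet d π (γ ω)
          = fun z => ∑ r, ((d r : ℂ) * γ ω r) * (π r z).trace := rfl
      rw [hgw, conv_sum]
      exact Finset.sum_congr rfl fun r _ => by rw [hA]; ring
    have e2 : (starRingEnd ℂ) (gwavelet d π (γ ω) ((h⁻¹ * x)⁻¹))
        = ∑ s, (starRingEnd ℂ) (γ ω s) * B s h := by
      show (starRingEnd ℂ) (∑ s, (d s : ℂ) * γ ω s * (π s ((h⁻¹ * x)⁻¹)).trace) = _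
      rw [map_sum]
      refine Finset.sum_congr rfl fun s _ => ?_
      rw [map_mul, map_mul, conj_trace hunit, inv_inv, map_natCast, hB]
      ring
    rw [e1, e2, Finset.sum_mul_sum]
    exact Finset.sum_congr rfl fun r _ => Finset.sum_congr rfl fun s _ => by ring
  have hIint : ∀ h : G, (∫ ω, conv f (gwavelet d π (γ ω)) h *
        (starRingEnd ℂ) (gwavelet d π (γ ω) ((h⁻¹ * x)⁻¹)) ∂μ)
      = ∑ r, ∑ s, (A r h * B s h) * I r s := by
    intro h
    rw [show (fun ω => conv f (gwavelet d π (γ ω)) h *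
          (starRingEnd ℂ) (gwavelet d π (γ ω) ((h⁻¹ * x)⁻¹)))
        = fun ω => ∑ r, ∑ s, (A r h * B s h) * (γ ω r * (starRingEnd ℂ) (γ ω s)) from
      funext fun ω => hexp ω h]
    rw [integral_finset_sum _ (fun r _ =>
      integrable_finset_sum _ (fun s _ => ((hint r s).const_mul _)))]
    refine Finset.sum_congr rfl fun r _ => ?_
    rw [integral_finset_sum _ (fun s _ => ((hint r s).const_mul _))]
    exact Finset.sum_congr rfl fun s _ => integral_const_mul _ _
  rw [Finset.sum_congr rfl fun h _ => hIint h]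
  have hABsum : ∀ r s : Fin k, (Fintype.card G : ℂ)⁻¹ * (∑ h : G, A r h * B s h)
      = if r = s then (d r : ℂ) * conv f (fun z => (π r z).trace) x else 0 := by
    intro r s
    have h1 : ∀ h : G, A r h * B s h = ((d r : ℂ) * (d s : ℂ)) *
        (conv f (fun z => (π r z).trace) h * (π s (h⁻¹ * x)).trace) := fun h => by
      rw [hA, hB]; ring
    rw [Finset.sum_congr rfl fun h _ => h1 h, ← Finset.mul_sum, mul_left_comm]
    have h2 : (Fintype.card G : ℂ)⁻¹ *
          ∑ h : G, conv f (fun z => (π r z).trace) h * (π s (h⁻¹ * x)).trace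
        = conv (conv f (fun z => (π r z).trace)) (fun z => (π s z).trace) x := rfl
    rw [h2, conv_assoc]
    rcases eq_or_ne r s with rfl | hrs
    · rw [if_pos rfl]
      have h3 : conv (fun z => (π r z).trace) (fun z => (π r z).trace)
          = fun z => (d r : ℂ)⁻¹ * (π r z).trace :=
        funext fun z => by rw [conv_char (π := π) hdpos hirr hneq r r z, if_pos rfl]
      rw [h3, conv_const_mul]
      have hd : (d r : ℂ) ≠ 0 := Nat.cast_ne_zero.mpr (hdpos r).ne'
      field_simp
    · rw [if_neg hrs]
      have h3 : conv (fun z => (π r z).trace) (fun z => (π s z).trace)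
          = fun _ => (0 : ℂ) :=
        funext fun z => by rw [conv_char (π := π) hdpos hirr hneq r s z, if_neg hrs]
      rw [h3]
      simp [conv]
  have swap : (Fintype.card G : ℂ)⁻¹ * (∑ h : G, ∑ r, ∑ s, (A r h * B s h) * I r s)
      = ∑ r, ∑ s, I r s * ((Fintype.card G : ℂ)⁻¹ * ∑ h : G, A r h * B s h) := by
    simp only [Finset.mul_sum]
    rw [Finset.sum_comm]
    refine Finset.sum_congr rfl fun r _ => ?_
    rw [Finset.sum_comm]
    refine Finset.sum_congr rfl fun s _ => ?_
    exact Finset.sum_congr rfl fun h _ => by ring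
  rw [swap, Finset.sum_congr rfl fun r _ => Finset.sum_congr rfl fun s _ => by rw [hABsum r s]]
  have hIrr : ∀ r : Fin k, I r r = 1 := by
    intro r
    rw [hI]
    have hnm : (fun ω => γ ω r * (starRingEnd ℂ) (γ ω r))
        = fun ω => ((Complex.normSq (γ ω r) : ℝ) : ℂ) := funext fun ω => Complex.mul_conj _
    show (∫ ω, γ ω r * (starRingEnd ℂ) (γ ω r) ∂μ) = 1
    rw [hnm]
    have : (∫ ω, ((Complex.normSq (γ ω r) : ℝ) : ℂ) ∂μ)
        = ((∫ ω, Complex.normSq (γ ω r) ∂μ : ℝ) : ℂ) := integral_ofReal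
    rw [this, hCalderon r, Complex.ofReal_one]
  have step : ∀ r : Fin k, (∑ s, I r s *
        (if r = s then (d r : ℂ) * conv f (fun z => (π r z).trace) x else 0))
      = (d r : ℂ) * conv f (fun z => (π r z).trace) x := by
    intro r
    rw [Finset.sum_congr rfl fun s _ => (mul_ite _ (I r s) _ _)]
    simp only [mul_zero]
    rw [Finset.sum_ite_eq Finset.univ r
      (fun s => I r s * ((d r : ℂ) * conv f (fun z => (π r z).trace) x))]
    simp [hIrr r]
  rw [Finset.sum_congr rfl fun r _ => step r]
  -- final: f x = ∑ r, d r * conv f χr x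
  have final : ∑ r, (d r : ℂ) * conv f (fun z => (π r z).trace) x = f x := by
    calc ∑ r, (d r : ℂ) * conv f (fun z => (π r z).trace) x
        = (Fintype.card G : ℂ)⁻¹ *
            ∑ y : G, f y * ∑ r, (d r : ℂ) * (π r (y⁻¹ * x)).trace := by
          simp only [conv, Finset.mul_sum]
          rw [Finset.sum_comm]
          refine Finset.sum_congr rfl fun y _ => ?_
          exact Finset.sum_congr rfl fun r _ => by ring
      _ = (Fintype.card G : ℂ)⁻¹ *
            ∑ y : G, f y * (if y⁻¹ * x = 1 then (Fintype.card G : ℂ) else 0) := by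
          refine congrArg _ (Finset.sum_congr rfl fun y _ => ?_)
          rw [completeness (π := π) hdpos hunit hirr hneq hcard (y⁻¹ * x)]
      _ = f x := by
          have hiff : ∀ y : G, (if y⁻¹ * x = 1 then (Fintype.card G : ℂ) else 0)
              = if y = x then (Fintype.card G : ℂ) else 0 := by
            intro y
            simp [inv_mul_eq_one]
          simp only [hiff, mul_ite, mul_zero]
          rw [Finset.sum_ite_eq' Finset.univ x (fun y => f y * (Fintype.card G : ℂ))]
          simp only [Finset.mem_univ, if_true]
          field_simp
  rw [final]
end

section
/- (Structural energy identity) Let {γ_j}_{0≤j≤J} be a kernel with Σ_{j=0}^J |γ_j(r)|² = 1 for all r. With φ = ψ_{γ_0}, U[j]f = |ψ_{γ_j} ∗ f|, U[p] the composition over a path p = (j_1,…,j_m) ∈ {1,…,J}^m, and S[p]f = φ ∗ U[p]f, it holds for every m ≥ 0: Σ_{p∈{1,…,J}^m} ‖U[p]f‖² = Σ_{p∈{1,…,J}^{m+1}} ‖U[p]f‖² + Σ_{p∈{1,…,J}^m} ‖S[p]f‖². -/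
open scoped BigOperators
open MeasureTheory

namespace Stmt9Aux

noncomputable def EM {n₁ n₂ : ℕ} (j : Fin n₁) (b : Fin n₂) : Matrix (Fin n₁) (Fin n₂) ℂ :=
  Matrix.of fun p q => if p = j ∧ q = b then 1 else 0

lemma EM_sandwich {n₁ n₂ : ℕ} (A : Matrix (Fin n₁) (Fin n₁) ℂ)
    (B : Matrix (Fin n₂) (Fin n₂) ℂ) (j : Fin n₁) (b : Fin n₂) (i : Fin n₁) (a : Fin n₂) :
    (A * EM j b * B) i a = A i j * B b a := by
  have h1 : ∀ q, (A * EM j b) i q = if q = b then A i j else 0 := by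
    intro q
    rw [Matrix.mul_apply]
    simp only [EM, Matrix.of_apply, mul_ite, mul_one, mul_zero, ← ite_and]
    by_cases h : q = b
    · simp [h, Finset.sum_ite_eq']
    · simp [h]
  rw [Matrix.mul_apply]
  rw [Finset.sum_congr rfl (fun q _ => by rw [h1 q])]
  simp [ite_mul]

lemma EM_trace {n : ℕ} (j b : Fin n) : (EM j b).trace = if j = b then 1 else 0 := by
  simp only [Matrix.trace, Matrix.diag, EM, Matrix.of_apply]
  rw [Finset.sum_congr rfl (fun x _ => show (if x = j ∧ x = b then (1:ℂ) else 0)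
    = if x = j then (if j = b then 1 else 0) else 0 by by_cases h : x = j <;> simp [h])]
  simp [Finset.sum_ite_eq']

section schur
variable {G : Type*} [Group G] [Fintype G]
variable {k : ℕ} {d : Fin k → ℕ}
variable (π : (r : Fin k) → G →* Matrix (Fin (d r)) (Fin (d r)) ℂ)

omit [Fintype G] in
lemma star_pi (hunit : ∀ r x, π r x ∈ Matrix.unitaryGroup (Fin (d r)) ℂ)
    (r : Fin k) (x : G) : star (π r x) = π r x⁻¹ := by
  have h1 : π r x * star (π r x) = 1 := Matrix.mem_unitaryGroup_iff.mp (hunit r x)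
  have h2 : π r x⁻¹ * π r x = 1 := by rw [← map_mul, inv_mul_cancel, map_one]
  calc star (π r x) = (π r x⁻¹ * π r x) * star (π r x) := by rw [h2, one_mul]
    _ = π r x⁻¹ * (π r x * star (π r x)) := by rw [mul_assoc]
    _ = π r x⁻¹ := by rw [h1, mul_one]

omit [Fintype G] in
lemma conj_pi_entry (hunit : ∀ r x, π r x ∈ Matrix.unitaryGroup (Fin (d r)) ℂ)
    (r : Fin k) (x : G) (a b : Fin (d r)) :
    (starRingEnd ℂ) ((π r x) a b) = (π r x⁻¹) b a := by
  rw [← star_pi π hunit]; rfl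

lemma avg_intertwine {n₁ n₂ : ℕ}
    (ρ₁ : G →* Matrix (Fin n₁) (Fin n₁) ℂ)
    (ρ₂ : G →* Matrix (Fin n₂) (Fin n₂) ℂ) (E : Matrix (Fin n₁) (Fin n₂) ℂ) (y : G) :
    ρ₁ y * (∑ x : G, ρ₁ x * E * ρ₂ x⁻¹) = (∑ x : G, ρ₁ x * E * ρ₂ x⁻¹) * ρ₂ y := by
  rw [Matrix.mul_sum, Matrix.sum_mul]
  refine Fintype.sum_bijective (fun x => y * x) (Group.mulLeft_bijective y) _ _ ?_
  intro x
  have hinv : ρ₂ y⁻¹ * ρ₂ y = 1 := by rw [← map_mul, inv_mul_cancel, map_one]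
  simp only [map_mul, mul_inv_rev, Matrix.mul_assoc]
  rw [hinv, mul_one]

lemma schur_diag (hunit : ∀ r x, π r x ∈ Matrix.unitaryGroup (Fin (d r)) ℂ)
    (hirr : ∀ (r : Fin k) (M : Matrix (Fin (d r)) (Fin (d r)) ℂ),
      (∀ x, M * π r x = π r x * M) → ∃ c : ℂ, M = c • (1 : Matrix (Fin (d r)) (Fin (d r)) ℂ))
    (r : Fin k) (hd : 0 < d r) (i j a b : Fin (d r)) :
    ∑ x : G, (π r x) i j * (starRingEnd ℂ) ((π r x) a b)
      = if i = a ∧ j = b then (Fintype.card G : ℂ) / (d r) else 0 := by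
  classical
  set T : Matrix (Fin (d r)) (Fin (d r)) ℂ := ∑ x : G, π r x * EM j b * π r x⁻¹ with hT
  obtain ⟨c, hc⟩ := hirr r T (fun y => (avg_intertwine (π r) (π r) (EM j b) y).symm)
  have htrT : T.trace = (Fintype.card G : ℂ) * (if j = b then 1 else 0) := by
    rw [hT, Matrix.trace_sum]
    have h2 : ∀ x : G, (π r x * EM j b * π r x⁻¹).trace = (EM j b).trace := by
      intro x
      rw [Matrix.trace_mul_comm, ← mul_assoc, ← map_mul, inv_mul_cancel, map_one, one_mul]
    rw [Finset.sum_congr rfl (fun x _ => h2 x), Finset.sum_const, Finset.card_univ,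
      nsmul_eq_mul, EM_trace]
  have hcval : c * (d r) = (Fintype.card G : ℂ) * (if j = b then 1 else 0) := by
    have h3 := htrT
    rw [hc, Matrix.trace_smul, Matrix.trace_one] at h3
    simpa [smul_eq_mul, Finset.card_univ] using h3
  have hentry : T i a = ∑ x : G, (π r x) i j * (starRingEnd ℂ) ((π r x) a b) := by
    rw [hT, Matrix.sum_apply]
    refine Finset.sum_congr rfl (fun x _ => ?_)
    rw [conj_pi_entry π hunit, EM_sandwich]
  have hIa : T i a = c * (if i = a then 1 else 0) := by
    rw [hc, Matrix.smul_apply, Matrix.one_apply, smul_eq_mul]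
  have hdne : (d r : ℂ) ≠ 0 := by exact_mod_cast hd.ne'
  rw [← hentry, hIa]
  by_cases h1 : i = a <;> by_cases h2 : j = b <;>
    simp only [h1, h2, if_true, if_false, and_self, mul_one, mul_zero, not_true, not_false_iff,
      and_false, false_and, true_and, and_true]
  · rw [eq_div_iff hdne]
    rw [if_pos h2, mul_one] at hcval
    exact hcval
  · rw [if_neg h2, mul_zero] at hcval
    exact (mul_eq_zero.mp hcval).resolve_right hdne

lemma schur_off (hunit : ∀ r x, π r x ∈ Matrix.unitaryGroup (Fin (d r)) ℂ)
    (hneq : ∀ (r s : Fin k), r ≠ s → ∀ T : Matrix (Fin (d r)) (Fin (d s)) ℂ,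
      (∀ x, π r x * T = T * π s x) → T = 0)
    (r s : Fin k) (hrs : r ≠ s) (i j : Fin (d r)) (a b : Fin (d s)) :
    ∑ x : G, (π r x) i j * (starRingEnd ℂ) ((π s x) a b) = 0 := by
  classical
  set T : Matrix (Fin (d r)) (Fin (d s)) ℂ := ∑ x : G, π r x * EM j b * π s x⁻¹ with hT
  have hz : T = 0 := hneq r s hrs T (fun y => avg_intertwine (π r) (π s) (EM j b) y)
  have hentry : T i a = ∑ x : G, (π r x) i j * (starRingEnd ℂ) ((π s x) a b) := by
    rw [hT, Matrix.sum_apply]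
    refine Finset.sum_congr rfl (fun x _ => ?_)
    rw [conj_pi_entry π hunit, EM_sandwich]
  rw [← hentry, hz]
  rfl

end schur

section chars
variable {G : Type*} [Group G] [Fintype G] [DecidableEq G]
variable {k : ℕ} {d : Fin k → ℕ}
variable (π : (r : Fin k) → G →* Matrix (Fin (d r)) (Fin (d r)) ℂ)

omit [Fintype G] [DecidableEq G] in
lemma char_conj_inv (r : Fin k) (x y : G) :
    (π r (y * x * y⁻¹)).trace = (π r x).trace := by
  have h1 : π r y⁻¹ * π r y = 1 := by rw [← map_mul, inv_mul_cancel, map_one]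
  calc (π r (y * x * y⁻¹)).trace = (π r y * π r x * π r y⁻¹).trace := by
        rw [map_mul, map_mul]
    _ = (π r y⁻¹ * (π r y * π r x)).trace := Matrix.trace_mul_comm _ _
    _ = ((π r y⁻¹ * π r y) * π r x).trace := by rw [mul_assoc]
    _ = (π r x).trace := by rw [h1, one_mul]

omit [Fintype G] [DecidableEq G] in
lemma char_one (r : Fin k) : (π r (1 : G)).trace = (d r : ℂ) := by
  rw [map_one, Matrix.trace_one]
  simp

lemma char_orth (hunit : ∀ r x, π r x ∈ Matrix.unitaryGroup (Fin (d r)) ℂ)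
    (hirr : ∀ (r : Fin k) (M : Matrix (Fin (d r)) (Fin (d r)) ℂ),
      (∀ x, M * π r x = π r x * M) → ∃ c : ℂ, M = c • (1 : Matrix (Fin (d r)) (Fin (d r)) ℂ))
    (hneq : ∀ (r s : Fin k), r ≠ s → ∀ T : Matrix (Fin (d r)) (Fin (d s)) ℂ,
      (∀ x, π r x * T = T * π s x) → T = 0)
    (hdpos : ∀ r, 0 < d r) (r s : Fin k) :
    ∑ x : G, (π r x).trace * (starRingEnd ℂ) ((π s x).trace)
      = if r = s then (Fintype.card G : ℂ) else 0 := by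
  classical
  have hexp : ∀ x : G, (π r x).trace * (starRingEnd ℂ) ((π s x).trace)
      = ∑ i, ∑ a, (π r x) i i * (starRingEnd ℂ) ((π s x) a a) := by
    intro x
    rw [Matrix.trace, Matrix.trace, map_sum, Finset.sum_mul_sum]
    rfl
  have key : ∑ x : G, (π r x).trace * (starRingEnd ℂ) ((π s x).trace)
      = ∑ i, ∑ a, ∑ x : G, (π r x) i i * (starRingEnd ℂ) ((π s x) a a) := by
    rw [Finset.sum_congr rfl (fun x _ => hexp x), Finset.sum_comm]
    exact Finset.sum_congr rfl (fun i _ => Finset.sum_comm)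
  rw [key]
  by_cases hrs : r = s
  · subst hrs
    rw [if_pos rfl]
    have h1 : ∀ i a : Fin (d r), ∑ x : G, (π r x) i i * (starRingEnd ℂ) ((π r x) a a)
        = if i = a then (Fintype.card G : ℂ) / (d r) else 0 := by
      intro i a
      rw [schur_diag π hunit hirr r (hdpos r) i i a a]
      by_cases h : i = a <;> simp [h]
    rw [Finset.sum_congr rfl (fun i _ => Finset.sum_congr rfl (fun a _ => h1 i a))]
    have hdne : (d r : ℂ) ≠ 0 := by exact_mod_cast (hdpos r).ne'
    simp only [Finset.sum_ite_eq, Finset.mem_univ, if_true]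
    rw [Finset.sum_const, Finset.card_univ, Fintype.card_fin, nsmul_eq_mul]
    field_simp
  · rw [if_neg hrs]
    rw [Finset.sum_congr rfl (fun i _ => Finset.sum_congr rfl
      (fun a _ => schur_off π hunit hneq r s hrs i i a a))]
    simp

lemma pair_sum (hunit : ∀ r x, π r x ∈ Matrix.unitaryGroup (Fin (d r)) ℂ)
    (hirr : ∀ (r : Fin k) (M : Matrix (Fin (d r)) (Fin (d r)) ℂ),
      (∀ x, M * π r x = π r x * M) → ∃ c : ℂ, M = c • (1 : Matrix (Fin (d r)) (Fin (d r)) ℂ))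
    (hneq : ∀ (r s : Fin k), r ≠ s → ∀ T : Matrix (Fin (d r)) (Fin (d s)) ℂ,
      (∀ x, π r x * T = T * π s x) → T = 0)
    (hdpos : ∀ r, 0 < d r) (c : Fin k → ℂ) (s : Fin k) :
    ∑ x : G, (∑ r, c r * (π r x).trace) * (starRingEnd ℂ) ((π s x).trace)
      = c s * (Fintype.card G : ℂ) := by
  classical
  have h1 : ∀ x : G, (∑ r, c r * (π r x).trace) * (starRingEnd ℂ) ((π s x).trace)
      = ∑ r, c r * ((π r x).trace * (starRingEnd ℂ) ((π s x).trace)) := by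
    intro x
    rw [Finset.sum_mul]
    exact Finset.sum_congr rfl (fun r _ => by ring)
  rw [Finset.sum_congr rfl (fun x _ => h1 x), Finset.sum_comm]
  rw [Finset.sum_congr rfl (fun r _ => by
    rw [← Finset.mul_sum, char_orth π hunit hirr hneq hdpos r s] :
    ∀ r ∈ Finset.univ, _ = c r * (if r = s then (Fintype.card G : ℂ) else 0))]
  simp [Finset.sum_ite_eq', mul_ite]

lemma char_complete (hunit : ∀ r x, π r x ∈ Matrix.unitaryGroup (Fin (d r)) ℂ)
    (hirr : ∀ (r : Fin k) (M : Matrix (Fin (d r)) (Fin (d r)) ℂ),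
      (∀ x, M * π r x = π r x * M) → ∃ c : ℂ, M = c • (1 : Matrix (Fin (d r)) (Fin (d r)) ℂ))
    (hneq : ∀ (r s : Fin k), r ≠ s → ∀ T : Matrix (Fin (d r)) (Fin (d s)) ℂ,
      (∀ x, π r x * T = T * π s x) → T = 0)
    (hdpos : ∀ r, 0 < d r) (hcard : Nat.card (ConjClasses G) = k) (w : G) :
    ∑ r, (d r : ℂ) * (π r w).trace
      = if w = 1 then (Fintype.card G : ℂ) else 0 := by
  classical
  have hk : 0 < k := hcard ▸ Nat.card_pos
  haveI : Nonempty (Fin k) := ⟨⟨0, hk⟩⟩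
  haveI : Fintype (ConjClasses G) := Fintype.ofFinite _
  -- the linear map from functions on conjugacy classes
  set Φ : (ConjClasses G → ℂ) →ₗ[ℂ] (G → ℂ) :=
    { toFun := fun g x => g (ConjClasses.mk x)
      map_add' := fun _ _ => rfl
      map_smul' := fun _ _ => rfl } with hΦ
  set V : Submodule ℂ (G → ℂ) := LinearMap.range Φ with hV
  have hinj : Function.Injective Φ := by
    intro g g' h
    funext q
    obtain ⟨x, rfl⟩ := ConjClasses.mk_surjective q
    exact congrFun h x
  have hfr : Module.finrank ℂ V = k := by
    rw [hV, LinearMap.finrank_range_of_inj hinj, Module.finrank_fintype_fun_eq_card,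
      ← Nat.card_eq_fintype_card, hcard]
  have hmemV : ∀ f : G → ℂ, (∀ x y, f (y * x * y⁻¹) = f x) → f ∈ V := by
    intro f hf
    refine ⟨Quotient.lift f ?_, ?_⟩
    · intro a b hab
      obtain ⟨c, hc⟩ := isConj_iff.mp hab
      rw [← hc, hf]
    · rfl
  -- the characters as elements of V
  have hχmem : ∀ r : Fin k, (fun x => (π r x).trace) ∈ V :=
    fun r => hmemV _ (fun x y => char_conj_inv π r x y)
  set χV : Fin k → V := fun r => ⟨fun x => (π r x).trace, hχmem r⟩ with hχV
  have hNne : (Fintype.card G : ℂ) ≠ 0 := by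
    exact_mod_cast Fintype.card_ne_zero
  have hli : LinearIndependent ℂ χV := by
    rw [Fintype.linearIndependent_iff]
    intro g hg s
    have hg' : ∑ r, g r • (fun x => (π r x).trace) = (0 : G → ℂ) := by
      have := congrArg (fun v : V => (v : G → ℂ)) hg
      simpa [χV] using this
    have h0 : ∀ x : G, ∑ r, g r * (π r x).trace = 0 := by
      intro x
      have := congrFun hg' x
      simpa using this
    have := pair_sum π hunit hirr hneq hdpos g s
    rw [Finset.sum_congr rfl (fun x _ => by rw [h0 x, zero_mul])] at this
    rw [Finset.sum_const, smul_zero] at this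
    exact (mul_eq_zero.mp this.symm).resolve_right hNne
  have hsp : Submodule.span ℂ (Set.range χV) = ⊤ :=
    hli.span_eq_top_of_card_eq_finrank (by rw [Fintype.card_fin, hfr])
  -- the completeness function
  set F : G → ℂ := fun w => (∑ r, (d r : ℂ) * (π r w).trace)
      - (if w = 1 then (Fintype.card G : ℂ) else 0) with hF
  have hFmem : F ∈ V := by
    refine hmemV F (fun x y => ?_)
    have h1 : (y * x * y⁻¹ = 1) ↔ (x = 1) := by
      constructor
      · intro h
        have := congrArg (fun z => y⁻¹ * z * y) h
        simpa [mul_assoc] using this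
      · rintro rfl; simp
    simp only [hF]
    rw [Finset.sum_congr rfl (fun r _ => by rw [char_conj_inv π r x y])]
    by_cases hx : x = 1
    · rw [if_pos (h1.mpr hx), if_pos hx]
    · rw [if_neg (fun h => hx (h1.mp h)), if_neg hx]
  -- F pairs to zero with every character
  have hFpair : ∀ s : Fin k, ∑ x : G, F x * (starRingEnd ℂ) ((π s x).trace) = 0 := by
    intro s
    have hsplit : ∀ x : G, F x * (starRingEnd ℂ) ((π s x).trace)
        = (∑ r, (d r : ℂ) * (π r x).trace) * (starRingEnd ℂ) ((π s x).trace)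
          - (if x = 1 then (Fintype.card G : ℂ) else 0) * (starRingEnd ℂ) ((π s x).trace) := by
      intro x; rw [hF]; ring
    rw [Finset.sum_congr rfl (fun x _ => hsplit x), Finset.sum_sub_distrib]
    rw [pair_sum π hunit hirr hneq hdpos (fun r => (d r : ℂ)) s]
    have hdelta : ∑ x : G, (if x = 1 then (Fintype.card G : ℂ) else 0)
        * (starRingEnd ℂ) ((π s x).trace)
        = (Fintype.card G : ℂ) * (starRingEnd ℂ) ((π s (1:G)).trace) := by
      rw [Finset.sum_congr rfl (fun x _ => ite_mul _ _ _ _)]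
      simp [Finset.sum_ite_eq']
    rw [hdelta, char_one, Complex.conj_natCast]
    ring
  -- write F in terms of the characters
  have hFspan : (⟨F, hFmem⟩ : V) ∈ Submodule.span ℂ (Set.range χV) := by
    rw [hsp]; trivial
  obtain ⟨c, hc⟩ := (Submodule.mem_span_range_iff_exists_fun ℂ).mp hFspan
  have hc' : ∑ r, c r • (fun x => (π r x).trace) = F := by
    have := congrArg (fun v : V => (v : G → ℂ)) hc
    simpa [χV] using this
  have hcz : ∀ s, c s = 0 := by
    intro s
    have h2 : ∑ x : G, F x * (starRingEnd ℂ) ((π s x).trace)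
        = c s * (Fintype.card G : ℂ) := by
      rw [← pair_sum π hunit hirr hneq hdpos c s]
      refine Finset.sum_congr rfl (fun x _ => ?_)
      congr 1
      have := congrFun hc' x
      simpa [smul_eq_mul] using this.symm
    rw [hFpair s] at h2
    exact (mul_eq_zero.mp h2.symm).resolve_right hNne
  have hF0 : F w = 0 := by
    have h3 := congrFun hc' w
    rw [Finset.sum_apply] at h3
    simp only [Pi.smul_apply, hcz, zero_smul, Finset.sum_const, smul_zero] at h3
    exact h3.symm
  rw [hF] at hF0
  exact sub_eq_zero.mp hF0
end chars

section convpart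
variable {G : Type*} [Group G] [Fintype G]
variable {k : ℕ} {d : Fin k → ℕ}
variable (π : (r : Fin k) → G →* Matrix (Fin (d r)) (Fin (d r)) ℂ)

omit [Fintype G] in
lemma trace_mul_apply' {n : ℕ} (A B : Matrix (Fin n) (Fin n) ℂ) :
    (A * B).trace = ∑ p : Fin n × Fin n, A p.1 p.2 * B p.2 p.1 := by
  rw [Fintype.sum_prod_type]
  simp only [Matrix.trace, Matrix.diag, Matrix.mul_apply]

lemma trace_pair_diag (hunit : ∀ r x, π r x ∈ Matrix.unitaryGroup (Fin (d r)) ℂ)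
    (hirr : ∀ (r : Fin k) (M : Matrix (Fin (d r)) (Fin (d r)) ℂ),
      (∀ x, M * π r x = π r x * M) → ∃ c : ℂ, M = c • (1 : Matrix (Fin (d r)) (Fin (d r)) ℂ))
    (r : Fin k) (hd : 0 < d r) (A B : Matrix (Fin (d r)) (Fin (d r)) ℂ) :
    ∑ x : G, (π r x * A).trace * (starRingEnd ℂ) ((π r x * B).trace)
      = ((Fintype.card G : ℂ) / (d r)) * (A * B.conjTranspose).trace := by
  classical
  have h1 : ∀ x : G, (π r x * A).trace * (starRingEnd ℂ) ((π r x * B).trace)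
      = ∑ p : Fin (d r) × Fin (d r), ∑ q : Fin (d r) × Fin (d r),
          ((π r x) p.1 p.2 * (starRingEnd ℂ) ((π r x) q.1 q.2))
            * (A p.2 p.1 * (starRingEnd ℂ) (B q.2 q.1)) := by
    intro x
    rw [trace_mul_apply', trace_mul_apply', map_sum, Finset.sum_mul_sum]
    refine Finset.sum_congr rfl (fun p _ => Finset.sum_congr rfl (fun q _ => ?_))
    rw [map_mul]
    ring
  rw [Finset.sum_congr rfl (fun x _ => h1 x), Finset.sum_comm]
  rw [Finset.sum_congr rfl (fun p _ => Finset.sum_comm)]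
  have h2 : ∀ p q : Fin (d r) × Fin (d r),
      ∑ x : G, ((π r x) p.1 p.2 * (starRingEnd ℂ) ((π r x) q.1 q.2))
          * (A p.2 p.1 * (starRingEnd ℂ) (B q.2 q.1))
      = (if q = p then ((Fintype.card G : ℂ) / (d r)) * (A p.2 p.1
          * (starRingEnd ℂ) (B p.2 p.1)) else 0) := by
    intro p q
    rw [← Finset.sum_mul, schur_diag π hunit hirr r hd p.1 p.2 q.1 q.2]
    by_cases h : q = p
    · subst h
      simp [mul_assoc]
    · rw [if_neg (fun hh => h (Prod.ext hh.1.symm hh.2.symm)), zero_mul, if_neg h]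
  rw [Finset.sum_congr rfl (fun p _ => Finset.sum_congr rfl (fun q _ => h2 p q))]
  simp only [Finset.sum_ite_eq', Finset.mem_univ, if_true]
  rw [trace_mul_apply', Finset.mul_sum]
  refine Fintype.sum_equiv (Equiv.prodComm _ _) _ _ (fun p => ?_)
  simp only [Equiv.prodComm_apply, Prod.fst_swap, Prod.snd_swap, Matrix.conjTranspose_apply]
  rw [show star (B p.2 p.1) = (starRingEnd ℂ) (B p.2 p.1) from rfl]

lemma trace_pair_off (hunit : ∀ r x, π r x ∈ Matrix.unitaryGroup (Fin (d r)) ℂ)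
    (hneq : ∀ (r s : Fin k), r ≠ s → ∀ T : Matrix (Fin (d r)) (Fin (d s)) ℂ,
      (∀ x, π r x * T = T * π s x) → T = 0)
    (r s : Fin k) (hrs : r ≠ s)
    (A : Matrix (Fin (d r)) (Fin (d r)) ℂ) (B : Matrix (Fin (d s)) (Fin (d s)) ℂ) :
    ∑ x : G, (π r x * A).trace * (starRingEnd ℂ) ((π s x * B).trace) = 0 := by
  classical
  have h1 : ∀ x : G, (π r x * A).trace * (starRingEnd ℂ) ((π s x * B).trace)
      = ∑ p : Fin (d r) × Fin (d r), ∑ q : Fin (d s) × Fin (d s),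
          ((π r x) p.1 p.2 * (starRingEnd ℂ) ((π s x) q.1 q.2))
            * (A p.2 p.1 * (starRingEnd ℂ) (B q.2 q.1)) := by
    intro x
    rw [trace_mul_apply', trace_mul_apply', map_sum, Finset.sum_mul_sum]
    refine Finset.sum_congr rfl (fun p _ => Finset.sum_congr rfl (fun q _ => ?_))
    rw [map_mul]
    ring
  rw [Finset.sum_congr rfl (fun x _ => h1 x), Finset.sum_comm]
  rw [Finset.sum_congr rfl (fun p _ => Finset.sum_comm)]
  have h2 : ∀ (p : Fin (d r) × Fin (d r)) (q : Fin (d s) × Fin (d s)),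
      ∑ x : G, ((π r x) p.1 p.2 * (starRingEnd ℂ) ((π s x) q.1 q.2))
          * (A p.2 p.1 * (starRingEnd ℂ) (B q.2 q.1)) = 0 := by
    intro p q
    rw [← Finset.sum_mul, schur_off π hunit hneq r s hrs p.1 p.2 q.1 q.2, zero_mul]
  rw [Finset.sum_congr rfl (fun p _ => Finset.sum_congr rfl (fun q _ => h2 p q))]
  simp

end convpart

section framepart
variable {G : Type*} [Group G] [Fintype G]
variable {k : ℕ} {d : Fin k → ℕ}
variable (π : (r : Fin k) → G →* Matrix (Fin (d r)) (Fin (d r)) ℂ)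

lemma conv_apply' (ψ g : G → ℂ) (x : G) :
    conv ψ g x = (Fintype.card G : ℂ)⁻¹ * ∑ u, ψ (x * u⁻¹) * g u := by
  show (Fintype.card G : ℂ)⁻¹ * (∑ y, ψ y * g (y⁻¹ * x)) = _
  congr 1
  refine (Fintype.sum_equiv ((Equiv.inv G).trans (Equiv.mulLeft x)) _ _ (fun u => ?_)).symm
  simp [mul_inv_rev, mul_assoc]

lemma key_conv (hunit : ∀ r x, π r x ∈ Matrix.unitaryGroup (Fin (d r)) ℂ)
    (hirr : ∀ (r : Fin k) (M : Matrix (Fin (d r)) (Fin (d r)) ℂ),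
      (∀ x, M * π r x = π r x * M) → ∃ c : ℂ, M = c • (1 : Matrix (Fin (d r)) (Fin (d r)) ℂ))
    (hneq : ∀ (r s : Fin k), r ≠ s → ∀ T : Matrix (Fin (d r)) (Fin (d s)) ℂ,
      (∀ x, π r x * T = T * π s x) → T = 0)
    (hdpos : ∀ r, 0 < d r) (γ δ : Fin k → ℂ) (u v : G) :
    ∑ x : G, gwavelet d π γ (x * u⁻¹) * (starRingEnd ℂ) (gwavelet d π δ (x * v⁻¹))
      = (Fintype.card G : ℂ)
          * ∑ r, γ r * (starRingEnd ℂ) (δ r) * (d r) * (π r (u⁻¹ * v)).trace := by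
  classical
  have h1 : ∀ x : G, gwavelet d π γ (x * u⁻¹) * (starRingEnd ℂ) (gwavelet d π δ (x * v⁻¹))
      = ∑ r, ∑ s, ((d r : ℂ) * γ r * (d s : ℂ) * (starRingEnd ℂ) (δ s)) *
          ((π r (x * u⁻¹)).trace * (starRingEnd ℂ) ((π s (x * v⁻¹)).trace)) := by
    intro x
    show (∑ r, (d r : ℂ) * γ r * (π r (x * u⁻¹)).trace)
        * (starRingEnd ℂ) (∑ s, (d s : ℂ) * δ s * (π s (x * v⁻¹)).trace) = _
    rw [map_sum, Finset.sum_mul_sum]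
    refine Finset.sum_congr rfl (fun r _ => Finset.sum_congr rfl (fun s _ => ?_))
    simp only [map_mul, Complex.conj_natCast]
    ring
  rw [Finset.sum_congr rfl (fun x _ => h1 x), Finset.sum_comm]
  rw [Finset.sum_congr rfl (fun r _ => Finset.sum_comm)]
  have h2 : ∀ r s : Fin k, ∑ x : G, ((d r : ℂ) * γ r * (d s : ℂ) * (starRingEnd ℂ) (δ s)) *
        ((π r (x * u⁻¹)).trace * (starRingEnd ℂ) ((π s (x * v⁻¹)).trace))
      = if s = r then ((d r : ℂ) * γ r * (d r : ℂ) * (starRingEnd ℂ) (δ r)) *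
          (((Fintype.card G : ℂ) / (d r)) * (π r (u⁻¹ * v)).trace) else 0 := by
    intro r s
    rw [← Finset.mul_sum]
    have hx : ∀ x : G, (π r (x * u⁻¹)).trace * (starRingEnd ℂ) ((π s (x * v⁻¹)).trace)
        = (π r x * π r u⁻¹).trace * (starRingEnd ℂ) ((π s x * π s v⁻¹).trace) := by
      intro x; rw [map_mul, map_mul]
    rw [Finset.sum_congr rfl (fun x _ => hx x)]
    by_cases h : s = r
    · subst h
      rw [if_pos rfl, trace_pair_diag π hunit hirr s (hdpos s)]
      have hstar : (π s v⁻¹).conjTranspose = π s v := by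
        rw [← Matrix.star_eq_conjTranspose, star_pi π hunit, inv_inv]
      rw [hstar, ← map_mul]
    · rw [if_neg h, trace_pair_off π hunit hneq r s (fun hh => h hh.symm), mul_zero]
  rw [Finset.sum_congr rfl (fun r _ => Finset.sum_congr rfl (fun s _ => h2 r s))]
  simp only [Finset.sum_ite_eq', Finset.mem_univ, if_true]
  rw [Finset.mul_sum]
  refine Finset.sum_congr rfl (fun r _ => ?_)
  have hdne : (d r : ℂ) ≠ 0 := by exact_mod_cast (hdpos r).ne'
  field_simp

lemma nsq_eq (g : G → ℂ) :
    ((nsq g : ℝ) : ℂ) = (Fintype.card G : ℂ)⁻¹ * ∑ x, g x * (starRingEnd ℂ) (g x) := by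
  rw [Finset.sum_congr rfl (fun x (_ : x ∈ Finset.univ) => Complex.mul_conj (g x))]
  unfold nsq
  push_cast
  ring

lemma frame_identity (hunit : ∀ r x, π r x ∈ Matrix.unitaryGroup (Fin (d r)) ℂ)
    (hirr : ∀ (r : Fin k) (M : Matrix (Fin (d r)) (Fin (d r)) ℂ),
      (∀ x, M * π r x = π r x * M) → ∃ c : ℂ, M = c • (1 : Matrix (Fin (d r)) (Fin (d r)) ℂ))
    (hneq : ∀ (r s : Fin k), r ≠ s → ∀ T : Matrix (Fin (d r)) (Fin (d s)) ℂ,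
      (∀ x, π r x * T = T * π s x) → T = 0)
    (hdpos : ∀ r, 0 < d r) (hcard : Nat.card (ConjClasses G) = k)
    {J : ℕ} (γ : Fin (J + 1) → Fin k → ℂ)
    (hPar : ∀ r : Fin k, ∑ j : Fin (J + 1), Complex.normSq (γ j r) = 1) (g : G → ℂ) :
    ∑ j : Fin (J + 1), nsq (conv (gwavelet d π (γ j)) g) = nsq g := by
  classical
  set N : ℂ := (Fintype.card G : ℂ) with hN
  have hNne : N ≠ 0 := by
    rw [hN]; exact_mod_cast Fintype.card_ne_zero
  -- work over ℂ
  have hconv : ∀ ψ : G → ℂ, ((nsq (conv ψ g) : ℝ) : ℂ)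
      = N⁻¹ * (N⁻¹ * N⁻¹) * ∑ u, ∑ v, (g u * (starRingEnd ℂ) (g v))
          * (∑ x, ψ (x * u⁻¹) * (starRingEnd ℂ) (ψ (x * v⁻¹))) := by
    intro ψ
    rw [nsq_eq]
    have step1 : ∀ x : G, conv ψ g x * (starRingEnd ℂ) (conv ψ g x)
        = (N⁻¹ * N⁻¹) * ∑ u, ∑ v, (ψ (x * u⁻¹) * g u)
            * ((starRingEnd ℂ) (ψ (x * v⁻¹)) * (starRingEnd ℂ) (g v)) := by
      intro x
      have hcnj : (starRingEnd ℂ) (conv ψ g x)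
          = N⁻¹ * ∑ v, (starRingEnd ℂ) (ψ (x * v⁻¹)) * (starRingEnd ℂ) (g v) := by
        rw [conv_apply', map_mul, map_sum, map_inv₀, Complex.conj_natCast, hN]
        exact congrArg _ (Finset.sum_congr rfl (fun v _ => map_mul _ _ _))
      rw [hcnj, conv_apply', ← hN, mul_mul_mul_comm, Finset.sum_mul_sum]
    rw [Finset.sum_congr rfl (fun x _ => step1 x), ← Finset.mul_sum, ← mul_assoc]
    congr 1
    rw [Finset.sum_comm]
    refine Finset.sum_congr rfl (fun u _ => ?_)
    rw [Finset.sum_comm]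
    refine Finset.sum_congr rfl (fun v _ => ?_)
    rw [Finset.mul_sum]
    exact Finset.sum_congr rfl (fun x _ => by ring)
  -- sum over j in ℂ
  have hsum : ((∑ j : Fin (J + 1), nsq (conv (gwavelet d π (γ j)) g) : ℝ) : ℂ)
      = ((nsq g : ℝ) : ℂ) := by
    push_cast
    rw [Finset.sum_congr rfl (fun j (_ : j ∈ Finset.univ) => hconv (gwavelet d π (γ j)))]
    rw [← Finset.mul_sum, Finset.sum_comm]
    have hjv : ∀ u : G, ∑ j : Fin (J + 1), ∑ v, (g u * (starRingEnd ℂ) (g v))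
        * (∑ x, gwavelet d π (γ j) (x * u⁻¹)
            * (starRingEnd ℂ) (gwavelet d π (γ j) (x * v⁻¹)))
        = ∑ v, (g u * (starRingEnd ℂ) (g v)) * (N * (if v = u then N else 0)) := by
      intro u
      rw [Finset.sum_comm]
      refine Finset.sum_congr rfl (fun v _ => ?_)
      rw [← Finset.mul_sum]
      congr 1
      rw [Finset.sum_congr rfl (fun j (_ : j ∈ Finset.univ) =>
        key_conv π hunit hirr hneq hdpos (γ j) (γ j) u v), ← Finset.mul_sum, ← hN]
      congr 1
      rw [Finset.sum_comm]
      have hr : ∀ r : Fin k, ∑ j : Fin (J + 1),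
          γ j r * (starRingEnd ℂ) (γ j r) * (d r) * (π r (u⁻¹ * v)).trace
          = (d r : ℂ) * (π r (u⁻¹ * v)).trace := by
        intro r
        rw [← Finset.sum_mul, ← Finset.sum_mul]
        have : (∑ j : Fin (J + 1), γ j r * (starRingEnd ℂ) (γ j r)) = 1 := by
          rw [Finset.sum_congr rfl (fun j (_ : j ∈ Finset.univ) => Complex.mul_conj (γ j r))]
          rw [← Complex.ofReal_sum, hPar r, Complex.ofReal_one]
        rw [this, one_mul]
      rw [Finset.sum_congr rfl (fun r _ => hr r)]
      rw [char_complete π hunit hirr hneq hdpos hcard (u⁻¹ * v), ← hN]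
      by_cases h : v = u
      · subst h; rw [if_pos (inv_mul_cancel v), if_pos rfl]
      · rw [if_neg (fun hh => h (by
          have := congrArg (fun z => u * z) hh
          simpa [← mul_assoc] using this)), if_neg h]
    rw [Finset.sum_congr rfl (fun u _ => hjv u)]
    have hu : ∀ u : G, ∑ v, (g u * (starRingEnd ℂ) (g v)) * (N * (if v = u then N else 0))
        = g u * (starRingEnd ℂ) (g u) * (N * N) := by
      intro u
      rw [Finset.sum_congr rfl (fun v (_ : v ∈ Finset.univ) => show
        (g u * (starRingEnd ℂ) (g v)) * (N * (if v = u then N else 0))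
          = if v = u then (g u * (starRingEnd ℂ) (g v)) * (N * N) else 0 by
        by_cases h : v = u <;> simp [h])]
      rw [Finset.sum_ite_eq' Finset.univ u]
      simp
    rw [Finset.sum_congr rfl (fun u _ => hu u), nsq_eq, ← hN, ← Finset.sum_mul]
    field_simp
  exact_mod_cast hsum

end framepart


section mainpart
variable {G : Type*} [Group G] [Fintype G]

lemma nsq_abs (h : G → ℂ) :
    nsq (fun x => ((‖h x‖ : ℝ) : ℂ)) = nsq h := by
  unfold nsq
  congr 1
  refine Finset.sum_congr rfl (fun x _ => ?_)
  rw [Complex.normSq_ofReal, ← Complex.sq_norm]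
  ring

lemma sum_cons_reindex {J m : ℕ} (F : List (Fin J) → ℝ) :
    ∑ p : Fin (m + 1) → Fin J, F (List.ofFn p)
      = ∑ j : Fin J, ∑ q : Fin m → Fin J, F (j :: List.ofFn q) := by
  calc ∑ p : Fin (m + 1) → Fin J, F (List.ofFn p)
      = ∑ z : Fin J × (Fin m → Fin J), F (z.1 :: List.ofFn z.2) :=
        (Fintype.sum_equiv (Fin.consEquiv (fun _ => Fin J)) _ _ (fun z => by
          simp [Fin.consEquiv, List.ofFn_succ])).symm
    _ = ∑ j : Fin J, ∑ q : Fin m → Fin J, F (j :: List.ofFn q) := Fintype.sum_prod_type _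

end mainpart

end Stmt9Aux

theorem stmt9 {G : Type*} [Group G] [Fintype G]
    {k : ℕ} (d : Fin k → ℕ) (hdpos : ∀ r, 0 < d r)
    (π : (r : Fin k) → G →* Matrix (Fin (d r)) (Fin (d r)) ℂ)
    (hunit : ∀ r x, π r x ∈ Matrix.unitaryGroup (Fin (d r)) ℂ)
    (hirr : ∀ (r : Fin k) (M : Matrix (Fin (d r)) (Fin (d r)) ℂ),
      (∀ x, M * π r x = π r x * M) → ∃ c : ℂ, M = c • (1 : Matrix (Fin (d r)) (Fin (d r)) ℂ))
    (hneq : ∀ (r s : Fin k), r ≠ s → ∀ T : Matrix (Fin (d r)) (Fin (d s)) ℂ,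
      (∀ x, π r x * T = T * π s x) → T = 0)
    (hcard : Nat.card (ConjClasses G) = k)
    {J : ℕ} (γ : Fin (J + 1) → Fin k → ℂ)
    (hPar : ∀ r : Fin k, ∑ j : Fin (J + 1), Complex.normSq (γ j r) = 1)
    (f : G → ℂ) (m : ℕ) :
    ∑ p : Fin m → Fin J,
        nsq (Upath (fun j => gwavelet d π (γ j.succ)) (List.ofFn p) f)
      = (∑ p : Fin (m + 1) → Fin J,
          nsq (Upath (fun j => gwavelet d π (γ j.succ)) (List.ofFn p) f))
        + ∑ p : Fin m → Fin J, nsq (Sop d π γ (List.ofFn p) f) := by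
  classical
  induction m generalizing f with
  | zero =>
      have hframe := Stmt9Aux.frame_identity π hunit hirr hneq hdpos hcard γ hPar f
      rw [Fin.sum_univ_succ] at hframe
      have hL : ∑ p : Fin 0 → Fin J,
          nsq (Upath (fun j => gwavelet d π (γ j.succ)) (List.ofFn p) f) = nsq f := by
        rw [Finset.sum_congr rfl (fun p (_ : p ∈ Finset.univ) => by
          rw [List.ofFn_zero] : ∀ p : Fin 0 → Fin J, p ∈ Finset.univ →
            nsq (Upath (fun j => gwavelet d π (γ j.succ)) (List.ofFn p) f)
              = nsq (Upath (fun j => gwavelet d π (γ j.succ)) [] f))]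
        rw [Finset.sum_const, Finset.card_univ]
        simp [Upath]
      have hR1 : ∑ p : Fin 1 → Fin J,
          nsq (Upath (fun j => gwavelet d π (γ j.succ)) (List.ofFn p) f)
          = ∑ j : Fin J, nsq (conv (gwavelet d π (γ j.succ)) f) := by
        refine (Fintype.sum_equiv (Equiv.funUnique (Fin 1) (Fin J)).symm _ _ (fun j => ?_)).symm
        have h1 : List.ofFn ((Equiv.funUnique (Fin 1) (Fin J)).symm j) = [j] := by
          simp [List.ofFn_succ]
        rw [h1]
        exact (Stmt9Aux.nsq_abs (conv (gwavelet d π (γ j.succ)) f)).symm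
      have hR2 : ∑ p : Fin 0 → Fin J, nsq (Sop d π γ (List.ofFn p) f)
          = nsq (conv (gwavelet d π (γ 0)) f) := by
        rw [Finset.sum_congr rfl (fun p (_ : p ∈ Finset.univ) => by
          rw [List.ofFn_zero] : ∀ p : Fin 0 → Fin J, p ∈ Finset.univ →
            nsq (Sop d π γ (List.ofFn p) f) = nsq (Sop d π γ [] f))]
        rw [Finset.sum_const, Finset.card_univ]
        simp [Sop, Upath]
      rw [hL, hR1, hR2, ← hframe]
      ring
  | succ m ih =>
      have key : ∀ (j : Fin J) (L : List (Fin J)) (h : G → ℂ),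
          Upath (fun j => gwavelet d π (γ j.succ)) (j :: L) h
            = Upath (fun j => gwavelet d π (γ j.succ)) L
                (fun x => ((‖conv (gwavelet d π (γ j.succ)) h x‖ : ℝ) : ℂ)) :=
        fun _ _ _ => rfl
      rw [Stmt9Aux.sum_cons_reindex (fun L =>
        nsq (Upath (fun j => gwavelet d π (γ j.succ)) L f))]
      rw [Stmt9Aux.sum_cons_reindex (fun L =>
        nsq (Upath (fun j => gwavelet d π (γ j.succ)) L f))]
      rw [Stmt9Aux.sum_cons_reindex (fun L => nsq (Sop d π γ L f))]
      rw [← Finset.sum_add_distrib]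
      refine Finset.sum_congr rfl (fun j _ => ?_)
      have hih := ih (fun x => ((‖conv (gwavelet d π (γ j.succ)) f x‖ : ℝ) : ℂ))
      calc ∑ q : Fin m → Fin J,
            nsq (Upath (fun j => gwavelet d π (γ j.succ)) (j :: List.ofFn q) f)
          = ∑ q : Fin m → Fin J, nsq (Upath (fun j => gwavelet d π (γ j.succ)) (List.ofFn q)
              (fun x => ((‖conv (gwavelet d π (γ j.succ)) f x‖ : ℝ) : ℂ))) :=
            Finset.sum_congr rfl (fun q _ => by rw [key])
        _ = (∑ q : Fin (m + 1) → Fin J,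
              nsq (Upath (fun j => gwavelet d π (γ j.succ)) (List.ofFn q)
                (fun x => ((‖conv (gwavelet d π (γ j.succ)) f x‖ : ℝ) : ℂ))))
            + ∑ q : Fin m → Fin J, nsq (Sop d π γ (List.ofFn q)
                (fun x => ((‖conv (gwavelet d π (γ j.succ)) f x‖ : ℝ) : ℂ))) := hih
        _ = (∑ q : Fin (m + 1) → Fin J,
              nsq (Upath (fun j => gwavelet d π (γ j.succ)) (j :: List.ofFn q) f))
            + ∑ q : Fin m → Fin J, nsq (Sop d π γ (j :: List.ofFn q) f) := rfl
end
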